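/- arXiv:1505.03201 — 2 statements merged into one kernel-verified Lean document; each statement's English description precedes it below -/
import Mathlib

section
/- Let m be even and n ∈ ℕ. Then there exists a constant c > 0 (depending only on m and n) such that for all x, y ∈ ℝ^n, c · ‖x^{*m} + y^{*m}‖ ≥ max{‖x‖^m, ‖y‖^m}. -/
/-- The `m`-fold self-convolution of `x ∈ ℝ^n`. -/
noncomputable def convPow (n m : ℕ) (x : Fin n → ℝ) : Fin ((n - 1) * m + 1) → ℝ :=
  fun i => ∑ f : Fin m → Fin n, if (∑ j, (f j : ℕ)) = (i : ℕ) then ∏ j, x (f j) else 0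

/-- The Euclidean norm on `ℝ^N`. -/
noncomputable def euclNorm {N : ℕ} (z : Fin N → ℝ) : ℝ := Real.sqrt (∑ i, z i ^ 2)

lemma euclNorm_nonneg' {N : ℕ} (z : Fin N → ℝ) : 0 ≤ euclNorm z := Real.sqrt_nonneg _

lemma euclNorm_eq_zero_iff {N : ℕ} (z : Fin N → ℝ) : euclNorm z = 0 ↔ z = 0 := by
  constructor
  · intro h
    have h0 : (0:ℝ) ≤ ∑ i, z i ^ 2 := Finset.sum_nonneg fun i _ => sq_nonneg _
    have hs : ∑ i, z i ^ 2 = 0 := (Real.sqrt_eq_zero h0).mp h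
    funext i
    have := (Finset.sum_eq_zero_iff_of_nonneg (fun i _ => sq_nonneg (z i))).mp hs i
      (Finset.mem_univ i)
    simpa [pow_eq_zero_iff] using this
  · intro h; simp [h, euclNorm]

lemma euclNorm_smul {N : ℕ} (c : ℝ) (z : Fin N → ℝ) : euclNorm (c • z) = |c| * euclNorm z := by
  unfold euclNorm
  simp only [Pi.smul_apply, smul_eq_mul, mul_pow, ← Finset.mul_sum]
  rw [Real.sqrt_mul (sq_nonneg c), Real.sqrt_sq_eq_abs]

lemma abs_le_euclNorm {N : ℕ} (z : Fin N → ℝ) (i : Fin N) : |z i| ≤ euclNorm z := by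
  rw [← Real.sqrt_sq_eq_abs]
  exact Real.sqrt_le_sqrt (Finset.single_le_sum (fun j _ => sq_nonneg (z j)) (Finset.mem_univ i))

lemma convPow_eval (n m : ℕ) (x : Fin n → ℝ) (t : ℝ) :
    ∑ i : Fin ((n-1)*m+1), convPow n m x i * t ^ (i : ℕ)
      = (∑ j : Fin n, x j * t ^ (j : ℕ)) ^ m := by
  rw [Fintype.sum_pow]
  unfold convPow
  simp only [Finset.sum_mul, ite_mul, zero_mul]
  rw [Finset.sum_comm]
  refine Finset.sum_congr rfl fun f _ => ?_
  have hb : (∑ j, (f j : ℕ)) < (n-1)*m+1 := by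
    have : ∀ j, (f j : ℕ) ≤ n - 1 := fun j => Nat.le_sub_one_of_lt (f j).isLt
    calc ∑ j, (f j : ℕ) ≤ ∑ _j : Fin m, (n-1) := Finset.sum_le_sum fun j _ => this j
    _ = m * (n-1) := by simp [Finset.sum_const, mul_comm]
    _ < (n-1)*m + 1 := by rw [mul_comm]; omega
  rw [Finset.sum_eq_single (⟨∑ j, (f j : ℕ), hb⟩ : Fin ((n-1)*m+1))]
  · simp [Finset.prod_mul_distrib, Finset.prod_pow_eq_pow_sum]
  · intro b _ hb'
    rw [if_neg]
    exact fun h => hb' (Fin.ext h.symm)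
  · intro h; exact absurd (Finset.mem_univ _) h

lemma convPow_smul (n m : ℕ) (c : ℝ) (x : Fin n → ℝ) :
    convPow n m (c • x) = c ^ m • convPow n m x := by
  funext i
  unfold convPow
  simp only [Pi.smul_apply, smul_eq_mul, Finset.mul_sum, mul_ite, mul_zero]
  refine Finset.sum_congr rfl fun f _ => ?_
  congr 1
  rw [Finset.prod_mul_distrib]
  simp [mul_comm]

lemma eq_zero_of_convPow_add_eq_zero (n m : ℕ) (hm : Even m) (hm0 : m ≠ 0)
    (x y : Fin n → ℝ) (h : convPow n m x + convPow n m y = 0) : x = 0 := by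
  have key : ∀ t : ℝ, (∑ j : Fin n, x j * t ^ (j : ℕ)) = 0 := by
    intro t
    have h1 : (∑ j : Fin n, x j * t ^ (j : ℕ)) ^ m
        + (∑ j : Fin n, y j * t ^ (j : ℕ)) ^ m = 0 := by
      rw [← convPow_eval, ← convPow_eval, ← Finset.sum_add_distrib]
      refine Finset.sum_eq_zero fun i _ => ?_
      have : convPow n m x i + convPow n m y i = 0 := congrFun h i
      rw [← add_mul, this, zero_mul]
    have hx : (0:ℝ) ≤ (∑ j : Fin n, x j * t ^ (j : ℕ)) ^ m := hm.pow_nonneg _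
    have hy : (0:ℝ) ≤ (∑ j : Fin n, y j * t ^ (j : ℕ)) ^ m := hm.pow_nonneg _
    have : (∑ j : Fin n, x j * t ^ (j : ℕ)) ^ m = 0 := by linarith
    exact pow_eq_zero_iff hm0 |>.mp this
  set p : Polynomial ℝ := ∑ j : Fin n, Polynomial.C (x j) * Polynomial.X ^ (j : ℕ) with hp
  have hpz : p = 0 := by
    apply Polynomial.funext
    intro t
    simpa [hp, Polynomial.eval_finset_sum] using key t
  funext k
  have hc : p.coeff (k : ℕ) = x k := by
    simp only [hp, Polynomial.finset_sum_coeff, Polynomial.coeff_C_mul, Polynomial.coeff_X_pow]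
    rw [Finset.sum_eq_single k]
    · simp
    · intro b _ hb
      rw [if_neg (fun h => hb (Fin.ext h.symm)), mul_zero]
    · simp
  rw [hpz] at hc
  simpa using hc.symm

lemma continuous_convPow (n m : ℕ) (i : Fin ((n-1)*m+1)) :
    Continuous fun x : Fin n → ℝ => convPow n m x i := by
  unfold convPow
  refine continuous_finset_sum _ fun f _ => ?_
  by_cases hc : (∑ j, (f j : ℕ)) = (i : ℕ)
  · simpa [hc] using continuous_finset_prod (Finset.univ : Finset (Fin m))
      fun j _ => (continuous_apply (f j) : Continuous fun x : Fin n → ℝ => x (f j))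
  · simp only [hc, if_false]
    exact continuous_const

/-- For even `m` there is `c > 0` such that
`c ⬝ ‖x^{*m} + y^{*m}‖ ≥ max {‖x‖^m, ‖y‖^m}` for all `x, y ∈ ℝ^n`. -/
theorem convPow_sum_coercive (n m : ℕ) (hm : Even m) :
    ∃ c : ℝ, 0 < c ∧ ∀ x y : Fin n → ℝ,
      max (euclNorm x ^ m) (euclNorm y ^ m) ≤ c * euclNorm (convPow n m x + convPow n m y) := by
  rcases Nat.eq_zero_or_pos m with hm0 | hm0
  · -- m = 0
    subst hm0
    refine ⟨1, one_pos, fun x y => ?_⟩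
    have hconv : ∀ z : Fin n → ℝ, ∀ i, convPow n 0 z i = 1 := by
      intro z i
      unfold convPow
      have : (i : ℕ) = 0 := by omega
      simp [this]
    have : euclNorm (convPow n 0 x + convPow n 0 y) = 2 := by
      unfold euclNorm
      have h4 : ∑ i, (convPow n 0 x + convPow n 0 y) i ^ 2 = 4 := by
        simp [Pi.add_apply, hconv]
        norm_num
      rw [h4]
      rw [show (4:ℝ) = 2^2 by norm_num, Real.sqrt_sq (by norm_num)]
    rw [this]
    simp
  have hm0' : m ≠ 0 := hm0.ne'
  rcases Nat.eq_zero_or_pos n with hn0 | hn0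
  · -- n = 0
    subst hn0
    refine ⟨1, one_pos, fun x y => ?_⟩
    have hx : euclNorm x = 0 := by simp [euclNorm]
    have hy : euclNorm y = 0 := by simp [euclNorm]
    rw [hx, hy, zero_pow hm0', max_self]
    exact mul_nonneg zero_le_one (euclNorm_nonneg' _)
  -- main case
  set G : (Fin n → ℝ) × (Fin n → ℝ) → ℝ :=
    fun p => euclNorm (convPow n m p.1 + convPow n m p.2) with hG
  have hGcont : Continuous G := by
    apply Real.continuous_sqrt.comp
    refine continuous_finset_sum _ fun i _ => ?_
    exact (((continuous_convPow n m i).comp continuous_fst).add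
      ((continuous_convPow n m i).comp continuous_snd)).pow 2
  set S : Set ((Fin n → ℝ) × (Fin n → ℝ)) :=
    {p | max (euclNorm p.1) (euclNorm p.2) = 1} with hS
  have hScont : Continuous fun p : (Fin n → ℝ) × (Fin n → ℝ) =>
      max (euclNorm p.1) (euclNorm p.2) := by
    have he : Continuous fun x : Fin n → ℝ => euclNorm x := by
      apply Real.continuous_sqrt.comp
      exact continuous_finset_sum _ fun i _ => (continuous_apply i).pow 2
    exact (he.comp continuous_fst).max (he.comp continuous_snd)
  have hSclosed : IsClosed S := isClosed_eq hScont continuous_const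
  have hSbdd : Bornology.IsBounded S := by
    apply Bornology.IsBounded.subset (Metric.isBounded_closedBall (x := 0) (r := 1))
    intro p hp
    simp only [Metric.mem_closedBall, dist_zero_right]
    rw [Prod.norm_def]
    have h1 : euclNorm p.1 ≤ 1 := le_of_max_le_left hp.le
    have h2 : euclNorm p.2 ≤ 1 := le_of_max_le_right hp.le
    apply max_le
    · rw [pi_norm_le_iff_of_nonneg zero_le_one]
      intro i
      exact (abs_le_euclNorm p.1 i).trans h1
    · rw [pi_norm_le_iff_of_nonneg zero_le_one]
      intro i
      exact (abs_le_euclNorm p.2 i).trans h2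
  have hScompact : IsCompact S := Metric.isCompact_of_isClosed_isBounded hSclosed hSbdd
  have hSne : S.Nonempty := by
    refine ⟨(fun j => if j = ⟨0, hn0⟩ then 1 else 0, 0), ?_⟩
    have h1 : euclNorm (fun j : Fin n => if j = ⟨0, hn0⟩ then (1:ℝ) else 0) = 1 := by
      unfold euclNorm
      rw [show ∑ i : Fin n, (if i = ⟨0, hn0⟩ then (1:ℝ) else 0) ^ 2 = 1 by
        simp [apply_ite (· ^ 2)]]
      exact Real.sqrt_one
    have h2 : euclNorm (0 : Fin n → ℝ) = 0 := by simp [euclNorm]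
    simp [hS, h1, h2]
  obtain ⟨p₀, hp₀S, hmin⟩ := hScompact.exists_isMinOn hSne hGcont.continuousOn
  have hε : 0 < G p₀ := by
    rcases lt_or_eq_of_le (euclNorm_nonneg' (convPow n m p₀.1 + convPow n m p₀.2)) with h | h
    · exact h
    have hz : convPow n m p₀.1 + convPow n m p₀.2 = 0 :=
      (euclNorm_eq_zero_iff _).mp h.symm
    have hx0 : p₀.1 = 0 := eq_zero_of_convPow_add_eq_zero n m hm hm0' _ _ hz
    have hy0 : p₀.2 = 0 := by
      apply eq_zero_of_convPow_add_eq_zero n m hm hm0' p₀.2 p₀.1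
      simpa [add_comm] using hz
    have : max (euclNorm p₀.1) (euclNorm p₀.2) = 1 := hp₀S
    rw [hx0, hy0] at this
    simp [euclNorm] at this
  refine ⟨(G p₀)⁻¹, inv_pos.mpr hε, fun x y => ?_⟩
  set M := max (euclNorm x) (euclNorm y) with hM
  have hMnonneg : 0 ≤ M := le_trans (euclNorm_nonneg' x) (le_max_left _ _)
  have hmaxpow : max (euclNorm x ^ m) (euclNorm y ^ m) = M ^ m := by
    rcases le_total (euclNorm x) (euclNorm y) with h | h
    · rw [max_eq_right (pow_le_pow_left₀ (euclNorm_nonneg' x) h m),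
        hM, max_eq_right h]
    · rw [max_eq_left (pow_le_pow_left₀ (euclNorm_nonneg' y) h m),
        hM, max_eq_left h]
  rcases eq_or_lt_of_le hMnonneg with hM0 | hM0
  · -- M = 0
    rw [hmaxpow, ← hM0, zero_pow hm0']
    exact mul_nonneg (inv_pos.mpr hε).le (euclNorm_nonneg' _)
  · -- M > 0
    set x' := M⁻¹ • x
    set y' := M⁻¹ • y
    have hmem : (x', y') ∈ S := by
      simp only [hS, Set.mem_setOf_eq]
      rw [euclNorm_smul, euclNorm_smul, abs_of_pos (inv_pos.mpr hM0),
        ← mul_max_of_nonneg _ _ (inv_pos.mpr hM0).le, ← hM, inv_mul_cancel₀ hM0.ne']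
    have hmin' : G p₀ ≤ G (x', y') := hmin hmem
    have hGval : G (x', y') = (M⁻¹) ^ m * euclNorm (convPow n m x + convPow n m y) := by
      simp only [hG]
      rw [show convPow n m x' + convPow n m y'
          = (M⁻¹) ^ m • (convPow n m x + convPow n m y) by
        rw [convPow_smul, convPow_smul, smul_add]]
      rw [euclNorm_smul, abs_of_pos (pow_pos (inv_pos.mpr hM0) m)]
    rw [hGval] at hmin'
    rw [hmaxpow]
    have hMm : 0 < M ^ m := pow_pos hM0 m
    have : M ^ m * G p₀ ≤ euclNorm (convPow n m x + convPow n m y) := by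
      have h2 := mul_le_mul_of_nonneg_left hmin' hMm.le
      rw [← mul_assoc, ← mul_pow, mul_inv_cancel₀ hM0.ne', one_pow, one_mul] at h2
      linarith [h2]
    calc M ^ m = (G p₀)⁻¹ * (M ^ m * G p₀) := by field_simp
    _ ≤ (G p₀)⁻¹ * euclNorm (convPow n m x + convPow n m y) :=
        mul_le_mul_of_nonneg_left this (inv_pos.mpr hε).le
end

section
/- Let m be even and u_0, ..., u_{(n-1)m} ∈ ℝ pairwise distinct, u_k = (1, u_k, ..., u_k^{n-1}). Let G = {α : Σ_k α_k u_k^{⊗m} is PSD} and H = {(A u_0^m, ..., A u_{(n-1)m}^m) : A ∈ U_{m,n}}, where U_{m,n} = conv{x^{⊗m} : x ∈ ℝ^n}. Then H* = G, i.e., α ∈ ℝ^{(n-1)m+1} satisfies ⟨α, h⟩ ≥ 0 for all h ∈ H if and only if Σ_k α_k u_k^{⊗m} is PSD. -/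
/-- The rank-one symmetric tensor `u^{⊗m}`, with entries `u_{i₁} ⋯ u_{i_m}`. -/
noncomputable def tpow (n m : ℕ) (u : Fin n → ℝ) : (Fin m → Fin n) → ℝ :=
  fun f => ∏ j, u (f j)

/-- Evaluation `A x^m = ∑ a_{i₁…i_m} x_{i₁} ⋯ x_{i_m}` of an order-`m` tensor. -/
noncomputable def teval (n m : ℕ) (A : (Fin m → Fin n) → ℝ) (x : Fin n → ℝ) : ℝ :=
  ∑ f : Fin m → Fin n, A f * ∏ j, x (f j)

/-- The Vandermonde vector `(1, c, …, c^{n-1}) ∈ ℝ^n`. -/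
noncomputable def vand (n : ℕ) (c : ℝ) : Fin n → ℝ := fun i => c ^ (i : ℕ)

lemma key (n m N : ℕ) (α : Fin N → ℝ) (v : Fin N → Fin n → ℝ) (A : (Fin m → Fin n) → ℝ) :
    ∑ k, α k * teval n m A (v k) = ∑ f, A f * (∑ k, α k • tpow n m (v k)) f := by
  simp only [teval, tpow, Finset.sum_apply, Pi.smul_apply, smul_eq_mul, Finset.mul_sum]
  rw [Finset.sum_comm]
  congr 1; ext f; congr 1; ext k; ring

/-- `H* = G`: a vector `α` pairs nonnegatively with all of
`H = {(A u_0^m, …, A u_{(n-1)m}^m) : A ∈ U_{m,n}}` iff `∑_k α_k u_k^{⊗m}` is PSD. -/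
theorem dual_H_eq_G (n m : ℕ) (hm : Even m)
    (u : Fin ((n - 1) * m + 1) → ℝ) (hu : Function.Injective u)
    (H : Set (Fin ((n - 1) * m + 1) → ℝ))
    (hH : H = {h | ∃ A ∈ convexHull ℝ {B : (Fin m → Fin n) → ℝ | ∃ x : Fin n → ℝ, B = tpow n m x},
      h = fun k => teval n m A (vand n (u k))}) :
    ∀ α : Fin ((n - 1) * m + 1) → ℝ,
      (∀ h ∈ H, 0 ≤ ∑ k, α k * h k) ↔
        ∀ x : Fin n → ℝ, 0 ≤ teval n m (∑ k, α k • tpow n m (vand n (u k))) x := by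
  intro α
  subst hH
  set T := ∑ k, α k • tpow n m (vand n (u k)) with hT
  -- teval T x = ∑_f (tpow x) f * T f
  have hTx : ∀ x : Fin n → ℝ, teval n m T x = ∑ f, tpow n m x f * T f := by
    intro x
    simp only [teval, tpow]
    congr 1; ext f; ring
  have hlin : IsLinearMap ℝ (fun A : (Fin m → Fin n) → ℝ => ∑ f, A f * T f) := by
    constructor
    · intro A B
      rw [← Finset.sum_add_distrib]
      congr 1; ext f; simp [add_mul]
    · intro c A
      rw [Finset.smul_sum]
      congr 1; ext f; simp [mul_assoc]
  constructor
  · intro hH x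
    have := hH (fun k => teval n m (tpow n m x) (vand n (u k)))
      ⟨tpow n m x, subset_convexHull ℝ _ ⟨x, rfl⟩, rfl⟩
    rw [key n m _ α (fun k => vand n (u k)) (tpow n m x)] at this
    rw [hTx x]
    exact this
  · intro hpsd h hh
    obtain ⟨A, hA, rfl⟩ := hh
    rw [key n m _ α (fun k => vand n (u k)) A]
    have hsub : convexHull ℝ {B : (Fin m → Fin n) → ℝ | ∃ x : Fin n → ℝ, B = tpow n m x}
        ⊆ {B | 0 ≤ ∑ f, B f * T f} := by
      apply convexHull_min
      · rintro B ⟨x, rfl⟩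
        have := hpsd x
        rw [hTx x] at this
        exact this
      · exact convex_halfSpace_ge hlin 0
    exact hsub hA
end
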